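/- If v ∈ Γ(0), then v(x) = 0 for Lebesgue-almost every x ∈ I \ M at which f(x) > 0; equivalently, v vanishes almost everywhere with respect to the measure f·𝓛¹ restricted to I \ M. Consequently the tangent space to μ is ℝ a.e. on I \ M for the absolutely continuous part of μ. -/

import Mathlib

open MeasureTheory Filter Set
open scoped ENNReal

/-- `v ∈ Γ(0)`: `v` is a `μ`-gradient of `0`. -/
def IsGradientOfZero (μ : Measure ℝ) (v : ℝ → ℝ) : Prop :=
  ∃ U : ℕ → ℝ → ℝ, (∀ n, ContDiff ℝ 1 (U n)) ∧
    Tendsto (fun n => eLpNorm (U n) 2 μ) atTop (nhds 0) ∧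
    Tendsto (fun n => eLpNorm (fun x => deriv (U n) x - v x) 2 μ) atTop (nhds 0)

lemma holder_bound (μ : Measure ℝ) (g : ℝ → ℝ) (J : Set ℝ) (hJ : MeasurableSet J)
    (f : ℝ → ℝ) (hfmeas : Measurable f)
    (hfpos : ∀ᵐ x ∂(volume.restrict J), 0 < f x)
    (hle : volume.withDensity (fun x => ENNReal.ofReal (f x)) ≤ μ)
    (hg : AEMeasurable g (volume.restrict J)) :
    ∫⁻ x in J, (‖g x‖₊ : ℝ≥0∞) ≤
      eLpNorm g 2 μ * (∫⁻ x in J, (ENNReal.ofReal (f x))⁻¹) ^ (1/2 : ℝ) := by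
  set ν := volume.restrict J with hν
  set F : ℝ → ℝ≥0∞ := fun x => (‖g x‖₊ : ℝ≥0∞) * (ENNReal.ofReal (f x)) ^ (1/2 : ℝ) with hF
  set G : ℝ → ℝ≥0∞ := fun x => ((ENNReal.ofReal (f x)) ^ (1/2 : ℝ))⁻¹ with hG
  have hgE : AEMeasurable (fun x => (‖g x‖₊ : ℝ≥0∞)) ν := hg.nnnorm.coe_nnreal_ennreal
  have hfE : Measurable fun x => (ENNReal.ofReal (f x)) ^ (1/2 : ℝ) :=
    (hfmeas.ennreal_ofReal).pow_const _
  have hFm : AEMeasurable F ν := hgE.mul hfE.aemeasurable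
  have hGm : AEMeasurable G ν := (hfE.inv).aemeasurable
  have key : ∀ᵐ x ∂ν, (‖g x‖₊ : ℝ≥0∞) = (F * G) x := by
    filter_upwards [hfpos] with x hx
    have h0 : (ENNReal.ofReal (f x)) ^ (1/2 : ℝ) ≠ 0 := by
      simp [ENNReal.rpow_eq_zero_iff, ENNReal.ofReal_eq_zero, not_le.mpr hx,
        ENNReal.ofReal_ne_top]
    have ht : (ENNReal.ofReal (f x)) ^ (1/2 : ℝ) ≠ ⊤ :=
      ENNReal.rpow_ne_top_of_nonneg (by norm_num) ENNReal.ofReal_ne_top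
    simp only [hF, hG, Pi.mul_apply]
    rw [mul_assoc, ENNReal.mul_inv_cancel h0 ht, mul_one]
  calc ∫⁻ x in J, (‖g x‖₊ : ℝ≥0∞) = ∫⁻ x, (F * G) x ∂ν := lintegral_congr_ae key
    _ ≤ (∫⁻ x, F x ^ (2:ℝ) ∂ν) ^ (1/2:ℝ) * (∫⁻ x, G x ^ (2:ℝ) ∂ν) ^ (1/2:ℝ) :=
        ENNReal.lintegral_mul_le_Lp_mul_Lq ν (by constructor <;> norm_num) hFm hGm
    _ ≤ eLpNorm g 2 μ * (∫⁻ x in J, (ENNReal.ofReal (f x))⁻¹) ^ (1/2 : ℝ) := by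
        gcongr
        · -- F part
          have hFsq : ∀ x, F x ^ (2:ℝ) = (‖g x‖₊ : ℝ≥0∞) ^ (2:ℝ) * ENNReal.ofReal (f x) := by
            intro x
            rw [hF]
            rw [ENNReal.mul_rpow_of_nonneg _ _ (by norm_num : (0:ℝ) ≤ 2),
              ← ENNReal.rpow_mul]
            norm_num
          have h1 : ∫⁻ x, F x ^ (2:ℝ) ∂ν
              = ∫⁻ x, (‖g x‖₊ : ℝ≥0∞) ^ (2:ℝ) ∂(ν.withDensity fun x => ENNReal.ofReal (f x)) := by
            rw [lintegral_withDensity_eq_lintegral_mul₀ hfmeas.ennreal_ofReal.aemeasurable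
              (by exact (hgE.pow_const _))]
            simp only [hFsq, Pi.mul_apply, mul_comm]
          have h2 : (ν.withDensity fun x => ENNReal.ofReal (f x)) ≤ μ := by
            rw [hν, ← restrict_withDensity hJ]
            exact le_trans (Measure.restrict_le_self) hle
          have h3 : ∫⁻ x, F x ^ (2:ℝ) ∂ν ≤ ∫⁻ x, (‖g x‖₊ : ℝ≥0∞) ^ (2:ℝ) ∂μ := by
            rw [h1]; exact lintegral_mono' h2 le_rfl
          calc (∫⁻ x, F x ^ (2:ℝ) ∂ν) ^ (1/2:ℝ)
              ≤ (∫⁻ x, (‖g x‖₊ : ℝ≥0∞) ^ (2:ℝ) ∂μ) ^ (1/2:ℝ) := by gcongr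
            _ = eLpNorm g 2 μ := by
                rw [eLpNorm_eq_lintegral_rpow_enorm_toReal (by norm_num) (by norm_num)]
                norm_num
                rfl
        · -- G part
          have : ∀ x, G x ^ (2:ℝ) = (ENNReal.ofReal (f x))⁻¹ := by
            intro x
            show ((ENNReal.ofReal (f x)) ^ ((1:ℝ)/2))⁻¹ ^ (2:ℝ) = (ENNReal.ofReal (f x))⁻¹
            rw [ENNReal.inv_rpow, ← ENNReal.rpow_mul]
            norm_num
          simp only [this]
          rfl

lemma vanish_on_Ioo (μ : Measure ℝ) [IsFiniteMeasure μ]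
    (f : ℝ → ℝ) (hfmeas : Measurable f)
    (μs : Measure ℝ)
    (hdecomp : μ = volume.withDensity (fun x => ENNReal.ofReal (f x)) + μs)
    (p q : ℝ) (hpq : p < q)
    (hfin : ∫⁻ t in Set.Ioo p q, (ENNReal.ofReal (f t))⁻¹ ≠ ⊤)
    (v : ℝ → ℝ) (hvL2 : MemLp v 2 μ) (hv : IsGradientOfZero μ v) :
    ∀ᵐ x ∂(volume.restrict (Set.Ioo p q)), v x = 0 := by
  set J : Set ℝ := Set.Ioo p q with hJdef
  have hJm : MeasurableSet J := measurableSet_Ioo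
  set ν := volume.restrict J with hν
  -- f is positive a.e. on J
  have hfpos : ∀ᵐ x ∂ν, 0 < f x := by
    filter_upwards [ae_lt_top (hfmeas.ennreal_ofReal.inv) hfin] with x hx
    simp only [Pi.inv_apply, ENNReal.inv_lt_top, ENNReal.ofReal_pos] at hx
    exact hx
  -- withDensity part is below μ
  have hle : volume.withDensity (fun x => ENNReal.ofReal (f x)) ≤ μ := by
    rw [hdecomp]; exact Measure.le_add_right le_rfl
  -- ν ≪ μ
  have hac : ν ≪ μ := by
    intro s hs
    have hts : μ (toMeasurable μ s) = 0 := by rwa [measure_toMeasurable]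
    have h1 : volume.withDensity (fun x => ENNReal.ofReal (f x)) (toMeasurable μ s) = 0 :=
      le_antisymm (hts ▸ hle _) zero_le
    rw [withDensity_apply_eq_zero' hfmeas.ennreal_ofReal.aemeasurable] at h1
    have h2 : ν {x | ¬ 0 < f x} = 0 := by
      rw [ae_iff] at hfpos; exact hfpos
    have hms : MeasurableSet {x | ¬ 0 < f x} := by
      simp only [not_lt]; exact measurableSet_le hfmeas measurable_const
    have h2' : volume ({x | ¬ 0 < f x} ∩ J) = 0 := by
      rwa [hν, Measure.restrict_apply hms] at h2
    have hsub : toMeasurable μ s ∩ J ⊆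
        ({x | ENNReal.ofReal (f x) ≠ 0} ∩ toMeasurable μ s) ∪ ({x | ¬ 0 < f x} ∩ J) := by
      intro x ⟨hxt, hxJ⟩
      by_cases hfx : 0 < f x
      · exact Or.inl ⟨(ENNReal.ofReal_pos.mpr hfx).ne', hxt⟩
      · exact Or.inr ⟨hfx, hxJ⟩
    refine le_antisymm ?_ zero_le
    calc ν s ≤ ν (toMeasurable μ s) := measure_mono (subset_toMeasurable μ s)
      _ = volume (toMeasurable μ s ∩ J) := by
          rw [hν, Measure.restrict_apply (measurableSet_toMeasurable μ s)]
      _ ≤ volume (({x | ENNReal.ofReal (f x) ≠ 0} ∩ toMeasurable μ s) ∪ ({x | ¬ 0 < f x} ∩ J)) :=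
          measure_mono hsub
      _ = 0 := measure_union_null h1 h2'
  obtain ⟨U, hU, hU0, hUv⟩ := hv
  -- L¹ convergence of the derivatives on J
  set C : ℝ≥0∞ := (∫⁻ x in J, (ENNReal.ofReal (f x))⁻¹) ^ (1/2 : ℝ) with hC
  have hCne : C ≠ ⊤ := by
    rw [hC]
    exact ENNReal.rpow_ne_top_of_nonneg (by norm_num) hfin
  have hvmeas : AEMeasurable v ν := hvL2.1.aemeasurable.mono_ac hac
  have hL1 : Tendsto (fun n => ∫⁻ x in J, (‖deriv (U n) x - v x‖₊ : ℝ≥0∞)) atTop (nhds 0) := by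
    have hbd : ∀ n, ∫⁻ x in J, (‖deriv (U n) x - v x‖₊ : ℝ≥0∞) ≤
        eLpNorm (fun x => deriv (U n) x - v x) 2 μ * C := by
      intro n
      exact holder_bound μ _ J hJm f hfmeas hfpos hle
        (((measurable_deriv (U n)).aemeasurable).sub hvmeas)
    have hup : Tendsto (fun n => eLpNorm (fun x => deriv (U n) x - v x) 2 μ * C) atTop
        (nhds 0) := by
      have := ENNReal.Tendsto.mul_const hUv (Or.inr hCne)
      rwa [zero_mul] at this
    exact tendsto_of_tendsto_of_tendsto_of_le_of_le tendsto_const_nhds hup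
      (fun n => zero_le) hbd
  -- v is integrable on J
  have hvInt : IntegrableOn v J volume := by
    refine ⟨hvL2.1.mono_ac hac, ?_⟩
    have h1 : ∫⁻ x in J, (‖v x‖₊ : ℝ≥0∞) ≤ eLpNorm v 2 μ * C :=
      holder_bound μ v J hJm f hfmeas hfpos hle hvmeas
    exact lt_of_le_of_lt h1 (ENNReal.mul_lt_top hvL2.2 hCne.lt_top)
  -- a.e. convergent subsequence for U n
  have htim : TendstoInMeasure μ U atTop (0 : ℝ → ℝ) := by
    refine tendstoInMeasure_of_tendsto_eLpNorm (p := (2:ℝ≥0∞)) (by norm_num)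
      (fun n => ((hU n).continuous).aestronglyMeasurable) aestronglyMeasurable_const ?_
    simpa using hU0
  obtain ⟨φ, hφ, hae⟩ := htim.exists_seq_tendsto_ae
  have haeν : ∀ᵐ x ∂ν, Tendsto (fun i => U (φ i) x) atTop (nhds 0) := by
    have := hac.ae_le hae
    filter_upwards [this] with x hx
    simpa using hx
  -- each deriv (U n) - v is integrable on J with finite lintegral of nnnorm
  have hgInt : ∀ n, IntegrableOn (fun t => deriv (U n) t - v t) J volume := by
    intro n
    have h1 : IntegrableOn (deriv (U n)) J volume := by
      apply ((hU n).continuous_deriv le_rfl).integrableOn_Icc.mono_set Set.Ioo_subset_Icc_self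
    exact h1.sub hvInt
  -- convergence of interval integrals
  have hconv : ∀ x ∈ J, ∀ y ∈ J,
      Tendsto (fun n => ∫ t in x..y, deriv (U (φ n)) t) atTop (nhds (∫ t in x..y, v t)) := by
    intro x hx y hy
    have huIcc : Set.uIcc x y ⊆ J := Set.ordConnected_Ioo.uIcc_subset hx hy
    have hIi1 : ∀ n, IntervalIntegrable (deriv (U n)) volume x y :=
      fun n => (((hU n).continuous_deriv le_rfl)).intervalIntegrable x y
    have hIi2 : IntervalIntegrable v volume x y :=
      (hvInt.mono_set huIcc).intervalIntegrable
    rw [tendsto_iff_dist_tendsto_zero]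
    have hBt : Tendsto (fun n => (∫⁻ t in J, (‖deriv (U (φ n)) t - v t‖₊ : ℝ≥0∞)).toReal)
        atTop (nhds 0) := by
      have h0 : Tendsto (fun n => ∫⁻ t in J, (‖deriv (U (φ n)) t - v t‖₊ : ℝ≥0∞)) atTop
          (nhds 0) := hL1.comp hφ.tendsto_atTop
      simpa [Function.comp_def] using (ENNReal.tendsto_toReal (by simp)).comp h0
    refine squeeze_zero (fun n => dist_nonneg) (fun n => ?_) hBt
    have hsub : dist (∫ t in x..y, deriv (U (φ n)) t) (∫ t in x..y, v t)
        = ‖∫ t in x..y, (deriv (U (φ n)) t - v t)‖ := by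
      rw [dist_eq_norm, ← intervalIntegral.integral_sub (hIi1 (φ n)) hIi2]
    rw [hsub]
    have h1 : ‖∫ t in x..y, (deriv (U (φ n)) t - v t)‖
        ≤ ∫ t in Set.uIoc x y, ‖deriv (U (φ n)) t - v t‖ :=
      intervalIntegral.norm_integral_le_integral_norm_uIoc
    have h2 : ∫ t in Set.uIoc x y, ‖deriv (U (φ n)) t - v t‖
        = (∫⁻ t in Set.uIoc x y, (‖deriv (U (φ n)) t - v t‖₊ : ℝ≥0∞)).toReal := by
      apply integral_norm_eq_lintegral_enorm
      exact ((hgInt (φ n)).mono_set (Set.uIoc_subset_uIcc.trans huIcc)).1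
    have h3 : (∫⁻ t in Set.uIoc x y, (‖deriv (U (φ n)) t - v t‖₊ : ℝ≥0∞)).toReal
        ≤ (∫⁻ t in J, (‖deriv (U (φ n)) t - v t‖₊ : ℝ≥0∞)).toReal := by
      apply ENNReal.toReal_mono
      · exact (hgInt (φ n)).2.ne
      · exact lintegral_mono_set (Set.uIoc_subset_uIcc.trans huIcc)
    linarith
  -- pick a base point x₀
  have hνne : ν ≠ 0 := by
    rw [hν, ← Measure.measure_univ_ne_zero, Measure.restrict_apply_univ, Real.volume_Ioo]
    simp [sub_pos.mpr hpq, ne_of_gt, ENNReal.ofReal_pos.mpr (sub_pos.mpr hpq)]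
  have : (ae ν).NeBot := ae_neBot.mpr hνne
  obtain ⟨x₀, hx₀t, hx₀J⟩ := (haeν.and (ae_restrict_mem hJm)).exists
  -- the primitive of v vanishes a.e. on J
  have hW : ∀ᵐ y ∂ν, (∫ t in x₀..y, v t) = 0 := by
    filter_upwards [haeν, ae_restrict_mem hJm] with y hyt hyJ
    have A := hconv x₀ hx₀J y hyJ
    have B : Tendsto (fun n => ∫ t in x₀..y, deriv (U (φ n)) t) atTop (nhds 0) := by
      have heq : (fun n => ∫ t in x₀..y, deriv (U (φ n)) t)
          = fun n => U (φ n) y - U (φ n) x₀ := by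
        funext n
        exact intervalIntegral.integral_deriv_eq_sub
          (fun t _ => ((hU (φ n)).differentiable one_ne_zero).differentiableAt)
          (((hU (φ n)).continuous_deriv le_rfl).intervalIntegrable x₀ y)
      rw [heq]
      simpa using hyt.sub hx₀t
    exact tendsto_nhds_unique A B
  -- upgrade to the indicator primitive, continuous on ℝ
  set v1 : ℝ → ℝ := J.indicator v with hv1def
  have hv1 : Integrable v1 volume := (integrable_indicator_iff hJm).mpr hvInt
  set W : ℝ → ℝ := fun y => ∫ t in x₀..y, v1 t with hWdef
  have hWc : Continuous W := intervalIntegral.continuous_primitive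
    (fun c d => hv1.intervalIntegrable) x₀
  have hWeq : ∀ y ∈ J, W y = ∫ t in x₀..y, v t := by
    intro y hy
    apply intervalIntegral.integral_congr
    intro t ht
    exact Set.indicator_of_mem (Set.ordConnected_Ioo.uIcc_subset hx₀J hy ht) v
  have hWae : ∀ᵐ y ∂ν, W y = 0 := by
    filter_upwards [hW, ae_restrict_mem hJm] with y hy hyJ
    rw [hWeq y hyJ]; exact hy
  -- W vanishes on all of J by continuity
  have hWJ : ∀ y ∈ J, W y = 0 := by
    by_contra hcon
    push_neg at hcon
    obtain ⟨y, hyJ, hyW⟩ := hcon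
    have hO : IsOpen (J ∩ {z | W z ≠ 0}) :=
      isOpen_Ioo.inter (isOpen_ne_fun hWc continuous_const)
    have hOpos : 0 < volume (J ∩ {z | W z ≠ 0}) :=
      hO.measure_pos volume ⟨y, hyJ, hyW⟩
    have hO0 : volume (J ∩ {z | W z ≠ 0}) = 0 := by
      have h1 : ν {z | W z ≠ 0} = 0 := by
        rw [ae_iff] at hWae
        simpa using hWae
      rw [hν, Measure.restrict_apply (isOpen_ne_fun hWc continuous_const).measurableSet] at h1
      rwa [Set.inter_comm]
    exact absurd hO0 hOpos.ne'
  -- W vanishes on the closure of J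
  have hWcl : ∀ y ∈ Set.Icc p q, W y = 0 := by
    intro y hy
    have h1 : closure J ⊆ {z | W z = 0} :=
      closure_minimal hWJ (isClosed_eq hWc continuous_const)
    rw [hJdef, closure_Ioo hpq.ne] at h1
    exact h1 hy
  -- W vanishes everywhere
  have hWall : ∀ y, W y = 0 := by
    intro y
    rcases le_or_gt y p with hyp | hyp
    · -- y ≤ p : W y = W p - ∫ y..p v1 = 0
      have hz : (∫ t in p..y, v1 t) = 0 := by
        have : Set.EqOn v1 (fun _ => (0:ℝ)) (Set.uIcc p y) := by
          intro t ht
          rw [Set.uIcc_of_ge hyp] at ht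
          apply Set.indicator_of_notMem
          rw [hJdef]
          exact fun hmem => absurd hmem.1 (not_lt.mpr ht.2)
        rw [intervalIntegral.integral_congr this]
        simp
      have := intervalIntegral.integral_add_adjacent_intervals
        (hv1.intervalIntegrable (a := x₀) (b := p)) (hv1.intervalIntegrable (a := p) (b := y))
      rw [hWdef]
      simp only []
      rw [← this, hz, add_zero]
      exact hWcl p ⟨le_rfl, hpq.le⟩
    · rcases le_or_gt q y with hyq | hyq
      · have hz : (∫ t in q..y, v1 t) = 0 := by
          have : Set.EqOn v1 (fun _ => (0:ℝ)) (Set.uIcc q y) := by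
            intro t ht
            rw [Set.uIcc_of_le hyq] at ht
            apply Set.indicator_of_notMem
            rw [hJdef]
            exact fun hmem => absurd hmem.2 (not_lt.mpr ht.1)
          rw [intervalIntegral.integral_congr this]
          simp
        have := intervalIntegral.integral_add_adjacent_intervals
          (hv1.intervalIntegrable (a := x₀) (b := q)) (hv1.intervalIntegrable (a := q) (b := y))
        rw [hWdef]
        simp only []
        rw [← this, hz, add_zero]
        exact hWcl q ⟨hpq.le, le_rfl⟩
      · exact hWJ y ⟨hyp, hyq⟩
  -- all interval integrals of v1 vanish
  have hint0 : ∀ s t : ℝ, (∫ u in s..t, v1 u) = 0 := by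
    intro s t
    have := intervalIntegral.integral_interval_sub_left
      (hv1.intervalIntegrable (a := x₀) (b := t)) (hv1.intervalIntegrable (a := x₀) (b := s))
    rw [← this]
    have h1 : (∫ u in x₀..t, v1 u) = W t := rfl
    have h2 : (∫ u in x₀..s, v1 u) = W s := rfl
    rw [h1, h2, hWall t, hWall s, sub_zero]
  -- hence v1 = 0 a.e. via the withDensity measures of positive and negative parts
  have hv1meas : AEStronglyMeasurable v1 volume := hv1.1
  have hv1z : ∀ᵐ x ∂(volume : Measure ℝ), v1 x = 0 := by
    set m1 : Measure ℝ := volume.withDensity (fun x => ENNReal.ofReal (v1 x)) with hm1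
    set m2 : Measure ℝ := volume.withDensity (fun x => ENNReal.ofReal (-v1 x)) with hm2
    have hofReal_max : ∀ c : ℝ, ENNReal.ofReal c = ENNReal.ofReal (max c 0) := by
      intro c
      rcases le_total c 0 with h | h
      · rw [ENNReal.ofReal_of_nonpos h, max_eq_right h, ENNReal.ofReal_zero]
      · rw [max_eq_left h]
    have hfin1 : ∫⁻ x, ENNReal.ofReal (v1 x) ∂volume ≠ ⊤ := by
      refine ne_top_of_le_ne_top hv1.2.ne (lintegral_mono fun x => ?_)
      rw [← ofReal_norm_eq_enorm]
      exact ENNReal.ofReal_le_ofReal (le_abs_self _)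
    have hIocEq : ∀ s t : ℝ, s < t → m1 (Set.Ioc s t) = m2 (Set.Ioc s t) := by
      intro s t hst
      rw [hm1, hm2, withDensity_apply _ measurableSet_Ioc,
        withDensity_apply _ measurableSet_Ioc]
      have hpp : IntegrableOn (fun x => max (v1 x) 0) (Set.Ioc s t) volume :=
        (hv1.integrableOn).pos_part
      have hnp : IntegrableOn (fun x => max (-v1 x) 0) (Set.Ioc s t) volume :=
        ((hv1.neg).integrableOn).pos_part
      have e1 : ∫⁻ x in Set.Ioc s t, ENNReal.ofReal (v1 x)
          = ENNReal.ofReal (∫ x in Set.Ioc s t, max (v1 x) 0) := by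
        rw [ofReal_integral_eq_lintegral_ofReal hpp
          (Filter.Eventually.of_forall fun x => le_max_right _ _)]
        exact lintegral_congr fun x => hofReal_max (v1 x)
      have e2 : ∫⁻ x in Set.Ioc s t, ENNReal.ofReal (-v1 x)
          = ENNReal.ofReal (∫ x in Set.Ioc s t, max (-v1 x) 0) := by
        rw [ofReal_integral_eq_lintegral_ofReal hnp
          (Filter.Eventually.of_forall fun x => le_max_right _ _)]
        exact lintegral_congr fun x => hofReal_max (-v1 x)
      have h4 : ∫ x in Set.Ioc s t, v1 x = 0 := by
        rw [← intervalIntegral.integral_of_le hst.le]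
        exact hint0 s t
      have h3 : (∫ x in Set.Ioc s t, max (v1 x) 0) - (∫ x in Set.Ioc s t, max (-v1 x) 0)
          = 0 := by
        have heq : (∫ x in Set.Ioc s t, max (v1 x) 0) - (∫ x in Set.Ioc s t, max (-v1 x) 0)
            = ∫ x in Set.Ioc s t, v1 x := by
          rw [← integral_sub hpp hnp]
          apply integral_congr_ae
          filter_upwards with x
          exact max_zero_sub_max_neg_zero_eq_self (v1 x)
        rw [heq, h4]
      rw [e1, e2, sub_eq_zero.mp h3]
    haveI : IsFiniteMeasure m1 := by
      constructor
      rw [hm1, withDensity_apply _ MeasurableSet.univ, Measure.restrict_univ]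
      exact hfin1.lt_top
    have hm12 : m1 = m2 := Measure.ext_of_Ioc m1 m2 (fun s t hst => hIocEq s t hst)
    have hd : (fun x => ENNReal.ofReal (v1 x)) =ᵐ[(volume : Measure ℝ)]
        (fun x => ENNReal.ofReal (-v1 x)) := by
      refine (withDensity_eq_iff ?_ ?_ hfin1).mp hm12
      · exact ENNReal.measurable_ofReal.comp_aemeasurable hv1.aemeasurable
      · exact ENNReal.measurable_ofReal.comp_aemeasurable hv1.neg.aemeasurable
    filter_upwards [hd] with x heq
    by_contra hne
    rcases lt_or_gt_of_ne hne with hlt | hgt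
    · rw [ENNReal.ofReal_of_nonpos hlt.le] at heq
      exact absurd heq.symm (ne_of_gt (ENNReal.ofReal_pos.mpr (neg_pos.mpr hlt)))
    · rw [ENNReal.ofReal_of_nonpos (neg_nonpos.mpr hgt.le)] at heq
      exact absurd heq (ne_of_gt (ENNReal.ofReal_pos.mpr hgt))
  rw [hν]
  have h1 : ∀ᵐ x ∂(volume.restrict J), v1 x = 0 := ae_restrict_of_ae hv1z
  filter_upwards [h1, ae_restrict_mem hJm] with x hx hxJ
  rwa [hv1def, Set.indicator_of_mem hxJ] at hx

/-- Any `μ`-gradient of `0` vanishes `f·𝓛¹`-a.e. on `I \ M`: the tangent space to `μ` is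
`ℝ` a.e. on `I \ M` for the absolutely continuous part of `μ`. -/
theorem gradient_of_zero_vanishes_outside_critical_set
    (a b : ℝ) (hab : a < b) (I : Set ℝ) (hI : I = Set.Ioo a b)
    (μ : Measure ℝ) [IsFiniteMeasure μ] (hμI : μ Iᶜ = 0)
    (f : ℝ → ℝ) (hfmeas : Measurable f) (hfnonneg : 0 ≤ f)
    (μs : Measure ℝ) (hsing : μs ⟂ₘ volume)
    (hdecomp : μ = volume.withDensity (fun x => ENNReal.ofReal (f x)) + μs)
    (M : Set ℝ)
    (hM : M = {x ∈ closure I | ∀ ε > 0,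
      ∫⁻ t in I ∩ Set.Ioo (x - ε) (x + ε), (ENNReal.ofReal (f t))⁻¹ = ⊤})
    (v : ℝ → ℝ) (hvL2 : MemLp v 2 μ) (hv : IsGradientOfZero μ v) :
    ∀ᵐ x ∂(volume.restrict (I \ M)), 0 < f x → v x = 0 := by
  set S : Set (ℚ × ℚ) := {r : ℚ × ℚ | ((r.1 : ℝ) < (r.2 : ℝ)) ∧
    Set.Ioo (r.1 : ℝ) (r.2 : ℝ) ⊆ I ∧
    (∫⁻ t in Set.Ioo (r.1 : ℝ) (r.2 : ℝ), (ENNReal.ofReal (f t))⁻¹) ≠ ⊤} with hS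
  have hcov : I \ M ⊆ ⋃ r ∈ S, Set.Ioo (r.1 : ℝ) (r.2 : ℝ) := by
    rintro x ⟨hxI, hxM⟩
    rw [hM] at hxM
    have hxM' : ¬ (∀ ε > 0, (∫⁻ t in I ∩ Set.Ioo (x - ε) (x + ε),
        (ENNReal.ofReal (f t))⁻¹) = ⊤) := fun hcon => hxM ⟨subset_closure hxI, hcon⟩
    push_neg at hxM'
    obtain ⟨ε, hε, hne⟩ := hxM'
    rw [hI] at hxI
    obtain ⟨r1, hr1l, hr1r⟩ := exists_rat_btwn
      (show max a (x - ε) < x from max_lt hxI.1 (by linarith))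
    obtain ⟨r2, hr2l, hr2r⟩ := exists_rat_btwn
      (show x < min b (x + ε) from lt_min hxI.2 (by linarith))
    have hsub : Set.Ioo (r1 : ℝ) (r2 : ℝ) ⊆ I ∩ Set.Ioo (x - ε) (x + ε) := by
      intro z hz
      refine ⟨?_, ?_, ?_⟩
      · rw [hI]
        exact ⟨lt_of_le_of_lt (le_max_left a (x - ε)) (hr1l.trans hz.1),
          lt_of_lt_of_le (hz.2.trans hr2r) (min_le_left b (x + ε))⟩
      · exact lt_of_le_of_lt (le_max_right a (x - ε)) (hr1l.trans hz.1)
      · exact lt_of_lt_of_le (hz.2.trans hr2r) (min_le_right b (x + ε))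
    have hrS : ((r1, r2) : ℚ × ℚ) ∈ S := by
      refine ⟨by exact_mod_cast hr1r.trans hr2l, ?_, ?_⟩
      · exact fun z hz => (hsub hz).1
      · exact ne_top_of_le_ne_top hne (lintegral_mono_set hsub)
    exact Set.mem_biUnion hrS ⟨hr1r, hr2l⟩
  have hgood : ∀ r ∈ S,
      ∀ᵐ x ∂(volume.restrict (Set.Ioo (r.1 : ℝ) (r.2 : ℝ))), v x = 0 := by
    rintro r ⟨hlt, _, hfin⟩
    exact vanish_on_Ioo μ f hfmeas μs hdecomp _ _ hlt hfin v hvL2 hv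
  have hUnion : ∀ᵐ x ∂(volume.restrict (⋃ r ∈ S, Set.Ioo (r.1 : ℝ) (r.2 : ℝ))),
      v x = 0 := by
    rw [ae_restrict_biUnion_iff _ S.to_countable]
    exact hgood
  have hfinal : ∀ᵐ x ∂(volume.restrict (I \ M)), v x = 0 :=
    hUnion.filter_mono (ae_mono (Measure.restrict_mono hcov le_rfl))
  filter_upwards [hfinal] with x hx
  exact fun _ => hx
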